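/- arXiv:2007.15932 — 2 statements merged into one kernel-verified Lean document; each statement's English description precedes it below -/
import Mathlib

section
/- In a rectangular EW-tableau, the 1-supports of the columns form a chain under inclusion, and the 1-supports of the rows form a chain under inclusion: for any two columns k, k' of T ∈ EW_{m,n}, either every row with a 1 in column k also has a 1 in column k', or vice versa; and the analogous statement holds for any two rows. Consequently the columns can be permuted so that to the left of every 0 there are only 0s, and the rows can be permuted so that above every 1 there are only 1s, making the 1s of the resulting tableau form a Ferrers shape in the top right corner. -/
/- Combinatorial objects from "EW-tableaux and parallelogram polyominoes".
A tableau of type `(m+1, n+1)` (i.e. with `m+1` rows and `n+1` columns) is a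
0/1-filling, encoded as a function to `Bool` (`true` = 1).  Rows are indexed
top to bottom, columns left to right, both starting at `0`.  The row labelled
`v i` (for `i < m+1`) and the column labelled `v ((m+1)+j)` (for `j < n+1`)
are recorded through permutations `rl`, `cl` of `Fin (m+1)`, `Fin (n+1)`. -/

namespace EWPaper

/-- A 0/1 tableau with `m+1` rows and `n+1` columns; `true` encodes the entry 1. -/
abbrev Tab (m n : ℕ) := Fin (m + 1) → Fin (n + 1) → Bool

variable {m n : ℕ}

/-- A rectangular EW-tableau: the top row is all 1s, every other row contains a 0,
and no four cells forming the corners of a rectangle carry 0s in two diagonally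
opposite corners and 1s in the other two. -/
def IsEW (T : Tab m n) : Prop :=
  (∀ j, T 0 j = true) ∧
  (∀ i : Fin (m + 1), i ≠ 0 → ∃ j, T i j = false) ∧
  (∀ (i i' : Fin (m + 1)) (j j' : Fin (n + 1)), i ≠ i' → j ≠ j' →
    T i j = true → T i' j' = true → (T i j' = true ∨ T i' j = true))

/-- The (0-based) column index of the leftmost 1 of row `i`. -/
noncomputable def leftmost (T : Tab m n) (i : Fin (m + 1)) : ℕ :=
  sInf {j : ℕ | ∃ h : j < n + 1, T i ⟨j, h⟩ = true}

/-- The (0-based) column index of the rightmost 1 of row `i`. -/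
noncomputable def rightmost (T : Tab m n) (i : Fin (m + 1)) : ℕ :=
  sSup {j : ℕ | ∃ h : j < n + 1, T i ⟨j, h⟩ = true}

/-- The (0-based) row index of the topmost 1 of column `j`. -/
noncomputable def topmost (T : Tab m n) (j : Fin (n + 1)) : ℕ :=
  sInf {i : ℕ | ∃ h : i < m + 1, T ⟨i, h⟩ j = true}

/-- Parallelogram polyomino (as a 0/1 tableau): 1s in the two corners `(1,1)` and
`(m,n)`; every row has a nonempty contiguous set of 1s; leftmost and rightmost 1s
of the rows move weakly to the right going down. -/
def IsPara (T : Tab m n) : Prop :=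
  T 0 0 = true ∧ T (Fin.last m) (Fin.last n) = true ∧
  (∀ i, ∃ j, T i j = true) ∧
  (∀ (i : Fin (m + 1)) (j j' j'' : Fin (n + 1)),
    j ≤ j' → j' ≤ j'' → T i j = true → T i j'' = true → T i j' = true) ∧
  (∀ i i' : Fin (m + 1), i ≤ i' → leftmost T i ≤ leftmost T i') ∧
  (∀ i i' : Fin (m + 1), i ≤ i' → rightmost T i ≤ rightmost T i')

/-- The number of 1s of a tableau. -/
def ones (T : Tab m n) : ℕ :=
  (Finset.univ.filter fun p : Fin (m + 1) × Fin (n + 1) => T p.1 p.2 = true).card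

/-- Ribbon parallelogram polyomino: a parallelogram polyomino of type `(m+1, n+1)`
with the minimal number `(m+1) + (n+1) - 1` of 1s. -/
def IsRib (T : Tab m n) : Prop := IsPara T ∧ ones T = m + n + 1

/-- A row- and column-labelled tableau: row `i` carries the label `v (rl i)` and
column `j` carries the label `v ((m+1) + cl j)`. -/
structure Labelled (m n : ℕ) where
  T : Tab m n
  rl : Equiv.Perm (Fin (m + 1))
  cl : Equiv.Perm (Fin (n + 1))

/-- Labelled parallelogram polyomino: the underlying tableau is a parallelogram
polyomino, the top row is labelled `v 0`, rows whose leftmost 1s are the same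
distance from the left side have labels increasing top to bottom, and columns
whose topmost 1s are at the same height have labels increasing left to right. -/
def IsLPara (D : Labelled m n) : Prop :=
  IsPara D.T ∧ D.rl 0 = 0 ∧
  (∀ i i' : Fin (m + 1), leftmost D.T i = leftmost D.T i' → i < i' → D.rl i < D.rl i') ∧
  (∀ j j' : Fin (n + 1), topmost D.T j = topmost D.T j' → j < j' → D.cl j < D.cl j')

/-- Labelled ribbon parallelogram polyomino. -/
def IsLRib (D : Labelled m n) : Prop := IsLPara D ∧ ones D.T = m + n + 1

/-- Step 1 of `φ`: the stable sort of the columns by their number of 1s, ascending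
(so that in an EW-tableau only 0s lie to the left of every 0), ties (identical
columns) broken by original label, increasing left to right. -/
def sortCols (T : Tab m n) : Equiv.Perm (Fin (n + 1)) :=
  Tuple.sort fun j => (Finset.univ.filter fun i => T i j = true).card

/-- Step 2 of `φ`: the stable sort of the rows by their number of 0s, ascending
(so that in an EW-tableau only 1s lie above every 1), ties (identical rows)
broken by original label, increasing top to bottom. -/
def sortRows (T : Tab m n) : Equiv.Perm (Fin (m + 1)) :=
  Tuple.sort fun i => (Finset.univ.filter fun j => T i j = false).card

/-- The tableau `T'` of Steps 1–2 of `φ`. -/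
def sortedTab (T : Tab m n) : Tab m n := fun i j => T (sortRows T i) (sortCols T j)

/-- Step 4 of `φ`: `R i j = 1` iff (`T' i j = 1` and (`i = m` or `T' (i+1) j = 0`)) or
(`T' i j = 0` and (`j = n` or `T' i (j+1) = 1`)). -/
def step4 (S : Tab m n) : Tab m n := fun i j =>
  (S i j && decide (∀ i' : Fin (m + 1), (i' : ℕ) = (i : ℕ) + 1 → S i' j = false)) ||
  (!S i j && decide (∀ j' : Fin (n + 1), (j' : ℕ) = (j : ℕ) + 1 → S i j' = true))

/-- The map `φ`: sort rows and columns, apply Step 4, and remember, as the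
labelling, where each row and column of the original tableau went. -/
def phi (T : Tab m n) : Labelled m n :=
  ⟨step4 (sortedTab T), sortRows T, sortCols T⟩

/-- The tableau `T'` of the definition of `ψ`:
`T'_{ij} = 1` iff `(i,j) = (1,1)` or there is `k < j` with `R i k = 1`. -/
def psiPre (R : Tab m n) : Tab m n := fun i j =>
  decide ((i = 0 ∧ j = 0) ∨ ∃ k : Fin (n + 1), k < j ∧ R i k = true)

/-- The map `ψ`: form `psiPre` of the underlying tableau and permute rows and
columns so that row and column labels are increasing (row `i` of the result is
the row of `psiPre D.T` labelled `v i`, and similarly for columns). -/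
def psi (D : Labelled m n) : Tab m n := fun i j =>
  psiPre D.T (D.rl.symm i) (D.cl.symm j)

/-- The entry of `T` at `(i, j)` is a cornersupport entry: there is a
non-attacking entry with the opposite value at `(i', j')` such that the
other two corners `(i', j)` and `(i, j')` carry the same value as `(i, j)`. -/
def Cornersupport (T : Tab m n) (i : Fin (m + 1)) (j : Fin (n + 1)) : Prop :=
  ∃ (i' : Fin (m + 1)) (j' : Fin (n + 1)),
    i' ≠ i ∧ j' ≠ j ∧ T i' j' ≠ T i j ∧ T i' j = T i j ∧ T i j' = T i j

instance (T : Tab m n) (i : Fin (m + 1)) (j : Fin (n + 1)) :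
    Decidable (Cornersupport T i j) := by
  unfold Cornersupport; infer_instance

/-- `η` of the row labelled `v i`: the number of non-cornersupport 0s in row `i`. -/
def etaRow (T : Tab m n) (i : Fin (m + 1)) : ℕ :=
  (Finset.univ.filter fun j => T i j = false ∧ ¬ Cornersupport T i j).card

/-- `η` of the column labelled `v ((m+1)+j)`: the number of non-cornersupport 1s
in column `j`. -/
def etaCol (T : Tab m n) (j : Fin (n + 1)) : ℕ :=
  (Finset.univ.filter fun i => T i j = true ∧ ¬ Cornersupport T i j).card

/-- A marked/decorated rectangular EW-tableau: a tableau together with a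
decoration value for each row below the first (recorded as `arow`, with the
normalisation `arow 0 = 0` for the unmarked top row) and each column (`acol`). -/
structure MEW (m n : ℕ) where
  T : Tab m n
  arow : Fin (m + 1) → ℕ
  acol : Fin (n + 1) → ℕ

/-- Membership in `MEW_{m+1,n+1}`: the tableau is an EW-tableau and the
decorations satisfy `0 ≤ a_i ≤ η_i(T) - 1`. -/
def IsMEW (M : MEW m n) : Prop :=
  IsEW M.T ∧ M.arow 0 = 0 ∧
  (∀ i : Fin (m + 1), i ≠ 0 → M.arow i < etaRow M.T i) ∧
  (∀ j : Fin (n + 1), M.acol j < etaCol M.T j)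

/-- The expansion `⟨D, ζ⟩` of a labelled ribbon parallelogram polyomino `D` by a
surplus vector `ζ` (indexed by labels): the row labelled `v i` gets `ζ i` cells
appended to the left of its leftmost 1, the column labelled `v ((m+1)+j)` gets
`ζ' j` cells appended above its topmost 1; the rows and columns are then
reordered so as to satisfy the labelling convention (sorted by the position of
the new leftmost/topmost 1, ties broken by increasing label) and the interior
is completed with 1s. -/
noncomputable def expand (D : Labelled m n)
    (zrow : Fin (m + 1) → ℕ) (zcol : Fin (n + 1) → ℕ) : Labelled m n :=
  let ell : Fin (m + 1) → ℕ := fun x => leftmost D.T x - zrow (D.rl x)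
  let top : Fin (n + 1) → ℕ := fun y => topmost D.T y - zcol (D.cl y)
  let σ : Equiv.Perm (Fin (m + 1)) := Tuple.sort fun x => toLex (ell x, (D.rl x : ℕ))
  let τ : Equiv.Perm (Fin (n + 1)) := Tuple.sort fun y => toLex (top y, (D.cl y : ℕ))
  ⟨fun i j => decide (ell (σ i) ≤ (j : ℕ) ∧ top (τ j) ≤ (i : ℕ)),
    σ.trans D.rl, τ.trans D.cl⟩

/-- The map `Φ` from marked EW-tableaux to labelled parallelogram polyominoes:
`Φ(T, a) = ⟨φ(T), ζ⟩` where `ζ_i = η_i(T) - a_i - 1`. -/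
noncomputable def Phi (M : MEW m n) : Labelled m n :=
  expand (phi M.T) (fun i => etaRow M.T i - M.arow i - 1)
    (fun j => etaCol M.T j - M.acol j - 1)

/-- ℕ-indexed version of `rightmost` (junk value for out-of-range rows). -/
noncomputable def rmaxN (P : Tab m n) (i : ℕ) : ℕ :=
  sSup {j : ℕ | ∃ (hi : i < m + 1) (hj : j < n + 1), P ⟨i, hi⟩ ⟨j, hj⟩ = true}

/-- The lowest 1 of column `j` (ℕ-indexed, junk value for out-of-range columns). -/
noncomputable def bmaxN (P : Tab m n) (j : ℕ) : ℕ :=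
  sSup {i : ℕ | ∃ (hi : i < m + 1) (hj : j < n + 1), P ⟨i, hi⟩ ⟨j, hj⟩ = true}

/-- The rows of the successive horizontal segments of the bounce path of `P`:
start in row 0; having arrived in row `i`, move right to the rightmost 1 of
row `i` and then down to the lowest 1 of that column. -/
noncomputable def bncI (P : Tab m n) : ℕ → ℕ
  | 0 => 0
  | k + 1 => bmaxN P (rmaxN P (bncI P k))

/-- The columns of the successive vertical segments of the bounce path of `P`. -/
noncomputable def bncJ (P : Tab m n) (k : ℕ) : ℕ := rmaxN P (bncI P k)

/-- The cell `(i, j)` is visited by the bounce path of `P`: it lies on the `k`-th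
horizontal segment (row `bncI k`, columns `bncJ (k-1)` to `bncJ k`, starting at
column 0 when `k = 0`) or on the `k`-th vertical segment (column `bncJ k`, rows
`bncI k` to `bncI (k+1)`) for some `k`. -/
def BounceCell (P : Tab m n) (i j : ℕ) : Prop :=
  ∃ k : ℕ,
    (i = bncI P k ∧ (match k with | 0 => 0 | k' + 1 => bncJ P k') ≤ j ∧ j ≤ bncJ P k) ∨
    (j = bncJ P k ∧ bncI P k ≤ i ∧ i ≤ bncI P (k + 1))

/-- The bounce path of `P`, as the 0/1 tableau whose 1s are exactly the cells
visited by the bounce path. -/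
noncomputable def bounceTab (P : Tab m n) : Tab m n := fun i j =>
  @decide (BounceCell P (i : ℕ) (j : ℕ)) (Classical.propDecidable _)

/-- `rl'` is the row labelling of the bounce ribbon of `D` induced by `D`:
within each class of rows of `bounce D.T` having their leftmost 1 in the same
column, the labels increase top to bottom, and each such class carries the same
set of labels as it does under the labelling of `D`. -/
def InducedRows (D : Labelled m n) (rl' : Equiv.Perm (Fin (m + 1))) : Prop :=
  (∀ i i' : Fin (m + 1), leftmost (bounceTab D.T) i = leftmost (bounceTab D.T) i' →
    i < i' → rl' i < rl' i') ∧
  (∀ c : ℕ,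
    (Finset.univ.filter fun i => leftmost (bounceTab D.T) i = c).image rl' =
    (Finset.univ.filter fun i => leftmost (bounceTab D.T) i = c).image D.rl)

/-- `cl'` is the column labelling of the bounce ribbon of `D` induced by `D`. -/
def InducedCols (D : Labelled m n) (cl' : Equiv.Perm (Fin (n + 1))) : Prop :=
  (∀ j j' : Fin (n + 1), topmost (bounceTab D.T) j = topmost (bounceTab D.T) j' →
    j < j' → cl' j < cl' j') ∧
  (∀ c : ℕ,
    (Finset.univ.filter fun j => topmost (bounceTab D.T) j = c).image cl' =
    (Finset.univ.filter fun j => topmost (bounceTab D.T) j = c).image D.cl)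

/-- The surplus of the row label `v i`: the position of the leftmost 1 of the row
of the bounce ribbon labelled `v i` minus the position of the leftmost 1 of the
row of `D` labelled `v i`. -/
noncomputable def surpRow (D : Labelled m n) (rl' : Equiv.Perm (Fin (m + 1)))
    (i : Fin (m + 1)) : ℤ :=
  (leftmost (bounceTab D.T) (rl'.symm i) : ℤ) - (leftmost D.T (D.rl.symm i) : ℤ)

/-- The surplus of the column label `v ((m+1)+j)`. -/
noncomputable def surpCol (D : Labelled m n) (cl' : Equiv.Perm (Fin (n + 1)))
    (j : Fin (n + 1)) : ℤ :=
  (topmost (bounceTab D.T) (cl'.symm j) : ℤ) - (topmost D.T (D.cl.symm j) : ℤ)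


/-- In a rectangular EW-tableau the 1-supports of the columns
form a chain under inclusion, as do the 1-supports of the rows; consequently the
rows and columns can be permuted so that in the resulting tableau only 0s lie to
the left of every 0 and only 1s lie above every 1, i.e. the 1s form a Ferrers
shape in the top right corner. -/
theorem supports_chain {m n : ℕ} (T : Tab m n) (hT : IsEW T) :
    (∀ k k' : Fin (n + 1),
      (∀ i, T i k = true → T i k' = true) ∨ (∀ i, T i k' = true → T i k = true)) ∧
    (∀ r r' : Fin (m + 1),
      (∀ j, T r j = true → T r' j = true) ∨ (∀ j, T r' j = true → T r j = true)) ∧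
    ∃ (σ : Equiv.Perm (Fin (m + 1))) (τ : Equiv.Perm (Fin (n + 1))),
      (∀ (i : Fin (m + 1)) (j j' : Fin (n + 1)), j ≤ j' →
        T (σ i) (τ j) = true → T (σ i) (τ j') = true) ∧
      (∀ (i i' : Fin (m + 1)) (j : Fin (n + 1)), i' ≤ i →
        T (σ i) (τ j) = true → T (σ i') (τ j) = true) := by
  have hcol : ∀ k k' : Fin (n + 1),
      (∀ i, T i k = true → T i k' = true) ∨ (∀ i, T i k' = true → T i k = true) := by
    intro k k'
    by_contra h
    push_neg at h
    obtain ⟨⟨i, hi1, hi2⟩, ⟨i', hi'1, hi'2⟩⟩ := h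
    have hkk' : k ≠ k' := by rintro rfl; exact hi2 hi1
    have hii' : i ≠ i' := by rintro rfl; exact hi2 hi'1
    rcases hT.2.2 i i' k k' hii' hkk' hi1 hi'1 with h1 | h1
    · exact hi2 h1
    · exact hi'2 h1
  have hrow : ∀ r r' : Fin (m + 1),
      (∀ j, T r j = true → T r' j = true) ∨ (∀ j, T r' j = true → T r j = true) := by
    intro r r'
    by_contra h
    push_neg at h
    obtain ⟨⟨j, hj1, hj2⟩, ⟨j', hj'1, hj'2⟩⟩ := h
    have hrr' : r ≠ r' := by rintro rfl; exact hj2 hj1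
    have hjj' : j ≠ j' := by rintro rfl; exact hj2 hj'1
    rcases hT.2.2 r r' j j' hrr' hjj' hj1 hj'1 with h1 | h1
    · exact hj'2 h1
    · exact hj2 h1
  refine ⟨hcol, hrow, ?_⟩
  set cOnes : Fin (n + 1) → ℕ :=
    fun k => (Finset.univ.filter fun i => T i k = true).card with hcOnes
  set rOnes : Fin (m + 1) → ℕ :=
    fun r => (Finset.univ.filter fun j => T r j = true).card with hrOnes
  set rKey : Fin (m + 1) → ℕ := fun r => n + 1 - rOnes r with hrKey
  refine ⟨Tuple.sort rKey, Tuple.sort cOnes, ?_, ?_⟩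
  · intro i j j' hjj' ht
    set k := Tuple.sort cOnes j
    set k' := Tuple.sort cOnes j'
    have hmono : cOnes k ≤ cOnes k' := Tuple.monotone_sort cOnes hjj'
    rcases hcol k k' with h | h
    · exact h _ ht
    · have hsub : (Finset.univ.filter fun i => T i k' = true) ⊆
          (Finset.univ.filter fun i => T i k = true) := by
        intro x hx
        simp only [Finset.mem_filter, Finset.mem_univ, true_and] at hx ⊢
        exact h _ hx
      have heq := Finset.eq_of_subset_of_card_le hsub hmono
      have hmem : (Tuple.sort rKey i : Fin (m + 1)) ∈
          (Finset.univ.filter fun x => T x k' = true) := by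
        rw [heq]
        simp only [Finset.mem_filter, Finset.mem_univ, true_and]
        exact ht
      simpa using hmem
  · intro i i' j hii' ht
    set r := Tuple.sort rKey i
    set r' := Tuple.sort rKey i'
    have hmono : rKey r' ≤ rKey r := Tuple.monotone_sort rKey hii'
    have hr1 : rOnes r ≤ n + 1 := by
      simpa using (Finset.card_filter_le Finset.univ fun j => T r j = true)
    have hr2 : rOnes r' ≤ n + 1 := by
      simpa using (Finset.card_filter_le Finset.univ fun j => T r' j = true)
    rcases hrow r r' with h | h
    · exact h _ ht
    · have hsub : (Finset.univ.filter fun j => T r' j = true) ⊆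
          (Finset.univ.filter fun j => T r j = true) := by
        intro x hx
        simp only [Finset.mem_filter, Finset.mem_univ, true_and] at hx ⊢
        exact h _ hx
      have hcard : rOnes r ≤ rOnes r' := by
        simp only [hrKey] at hmono
        omega
      have heq := Finset.eq_of_subset_of_card_le hsub hcard
      have hmem : Tuple.sort cOnes j ∈ (Finset.univ.filter fun x => T r' x = true) := by
        rw [heq]
        simp only [Finset.mem_filter, Finset.mem_univ, true_and]
        exact ht
      simpa using hmem

end EWPaper
end

section
/- Step 4 of the map φ is invertible on sorted EW-tableaux: let T' be an m×n 0/1 tableau whose 1s form a Ferrers shape in the top right corner (only 0s to the left of every 0, only 1s above every 1) with top row all 1s and every other row containing a 0, and let R be defined by R_{ij}=1 iff (T'_{ij}=1 and (i=m or T'_{i+1,j}=0)) or (T'_{ij}=0 and (j=n or T'_{i,j+1}=1)). Then T' is recovered from R by the following rule: in the first row of R change every 0 to a 1, and in every other row replace the leftmost 1 by a 0 and change all entries to its right to 1s. -/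
/- Combinatorial objects from "EW-tableaux and parallelogram polyominoes".
A tableau of type `(m+1, n+1)` (i.e. with `m+1` rows and `n+1` columns) is a
0/1-filling, encoded as a function to `Bool` (`true` = 1).  Rows are indexed
top to bottom, columns left to right, both starting at `0`.  The row labelled
`v i` (for `i < m+1`) and the column labelled `v ((m+1)+j)` (for `j < n+1`)
are recorded through permutations `rl`, `cl` of `Fin (m+1)`, `Fin (n+1)`. -/

namespace EWPaper

variable {m n : ℕ}

/-- Step 4 of `φ` is invertible on sorted EW-tableaux: if the
1s of `T'` form a Ferrers shape in the top right corner (1s in each row form a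
suffix, 1s in each column form a prefix, the rows' numbers of 1s weakly decrease
from top to bottom), the top row is all 1s, and every other row contains a 0,
then `T'` is recovered from `R = step4 T'` by turning every entry of the first
row into a 1 and, in every other row, replacing the leftmost 1 by a 0, turning
every entry to its right into a 1, and keeping the entries to its left. -/
theorem step4_inverse {m n : ℕ} (T' : Tab m n)
    (h1 : ∀ j, T' 0 j = true)
    (h2 : ∀ i : Fin (m + 1), i ≠ 0 → ∃ j, T' i j = false)
    (h3 : ∀ (i : Fin (m + 1)) (j j' : Fin (n + 1)), j ≤ j' →
      T' i j = true → T' i j' = true)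
    (h4 : ∀ (i i' : Fin (m + 1)) (j : Fin (n + 1)), i' ≤ i →
      T' i j = true → T' i' j = true)
    (h5 : ∀ i i' : Fin (m + 1), i ≤ i' →
      (Finset.univ.filter fun j => T' i' j = true).card ≤
        (Finset.univ.filter fun j => T' i j = true).card) :
    ∀ (i : Fin (m + 1)) (j : Fin (n + 1)),
      (if i = 0 then true
        else if (j : ℕ) < leftmost (step4 T') i then step4 T' i j
        else decide (leftmost (step4 T') i < (j : ℕ))) = T' i j := by
  intro i j
  by_cases hi : i = 0
  · simp [hi, h1]
  · rw [if_neg hi]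
    set Z : Set ℕ := {k : ℕ | ∃ h : k < n + 1, T' i ⟨k, h⟩ = false} with hZ
    have hZne : Z.Nonempty := by
      obtain ⟨j0, hj0⟩ := h2 i hi
      exact ⟨j0.1, j0.2, by simpa using hj0⟩
    have hZbdd : BddAbove Z := ⟨n, fun k hk => Nat.lt_succ_iff.mp hk.1⟩
    set d := sSup Z with hd
    have hdmem : d ∈ Z := Nat.sSup_mem hZne hZbdd
    obtain ⟨hdn, hdfalse⟩ := hdmem
    have hfalse : ∀ j' : Fin (n + 1), (j' : ℕ) ≤ d → T' i j' = false := by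
      intro j' hj'
      by_contra hne
      have ht : T' i j' = true := by cases hb : T' i j' <;> simp_all
      have := h3 i j' ⟨d, hdn⟩ (by simpa [Fin.le_def] using hj') ht
      rw [hdfalse] at this; exact absurd this (by simp)
    have htrue : ∀ j' : Fin (n + 1), d < (j' : ℕ) → T' i j' = true := by
      intro j' hj'
      by_contra hne
      have hf : T' i j' = false := by cases hb : T' i j' <;> simp_all
      have : (j' : ℕ) ≤ d := le_csSup hZbdd ⟨j'.2, by simpa using hf⟩
      omega
    have hRd : step4 T' i ⟨d, hdn⟩ = true := by
      simp only [step4, hdfalse, Bool.false_and, Bool.not_false, Bool.true_and,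
        Bool.false_or, decide_eq_true_iff]
      intro j' hj'
      exact htrue j' (by omega)
    have hRlt : ∀ j' : Fin (n + 1), (j' : ℕ) < d → step4 T' i j' = false := by
      intro j' hj'
      have h0 : T' i j' = false := hfalse j' (le_of_lt hj')
      simp only [step4, h0, Bool.false_and, Bool.not_false, Bool.true_and,
        Bool.false_or, decide_eq_false_iff_not]
      intro hall
      have hlt : (j' : ℕ) + 1 < n + 1 := by omega
      have := hall ⟨(j' : ℕ) + 1, hlt⟩ rfl
      rw [hfalse ⟨(j' : ℕ) + 1, hlt⟩ (by simp; omega)] at this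
      exact absurd this (by simp)
    have hleft : leftmost (step4 T') i = d := by
      unfold leftmost
      have hmem : d ∈ {k : ℕ | ∃ h : k < n + 1, step4 T' i ⟨k, h⟩ = true} := ⟨hdn, hRd⟩
      apply le_antisymm
      · exact Nat.sInf_le hmem
      · apply le_csInf ⟨d, hmem⟩
        intro k hk
        obtain ⟨hk1, hk2⟩ := hk
        by_contra h
        push_neg at h
        rw [hRlt ⟨k, hk1⟩ h] at hk2
        exact absurd hk2 (by simp)
    rw [hleft]
    rcases lt_trichotomy ((j : ℕ)) d with h | h | h
    · rw [if_pos h, hRlt j h, hfalse j (le_of_lt h)]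
    · rw [if_neg (by omega), hfalse j (le_of_eq h)]
      simp [h]
    · rw [if_neg (by omega), htrue j h]
      simp [h]

end EWPaper
end
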